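/- For the homogeneous tree T^n of branching number n and any real t ∈ [0, c_p(∂T^n)], there exists a compact subset K_t ⊆ ∂T^n with c_p(K_t) = t. -/

import Mathlib

open scoped ENNReal
open MeasureTheory

/-- A locally finite rooted tree, given by its set of edges. The root edge has no parent,
every other edge has a parent, and every edge has finitely many children. -/
structure RTree where
  E : Type
  root : E
  parent : E → Option E
  parent_root : parent root = none
  parent_isSome : ∀ α, α ≠ root → (parent α).isSome
  level : E → ℕ
  level_root : level root = 0
  level_parent : ∀ α β, parent α = some β → level α = level β + 1
  locFin : ∀ α, {β | parent β = some α}.Finite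

namespace RTree

variable (T : RTree)

/-- `Le T α β` : the edge `α` is an ancestor of (or equal to) the edge `β`,
i.e. `α ≤ β` in the natural partial order on edges. -/
def Le (α β : T.E) : Prop :=
  Relation.ReflTransGen (fun x y => T.parent y = some x) α β

/-- The boundary of `T`: half-infinite geodesics starting at the root edge. -/
structure Boundary where
  seq : ℕ → T.E
  seq_zero : seq 0 = T.root
  seq_parent : ∀ n, T.parent (seq (n + 1)) = some (seq n)

/-- The boundary `∂T_α` of the tent over the edge `α`: boundary points whose
geodesic passes through `α`. -/
def tentB (α : T.E) : Set T.Boundary := {ζ | ∃ n, ζ.seq n = α}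

/-- The standard topology on the boundary, with the tent boundaries as a basis. -/
def ttop : TopologicalSpace T.Boundary :=
  TopologicalSpace.generateFrom {s | ∃ α, s = T.tentB α}

/-- The Borel σ-algebra on the boundary. -/
def tborel : MeasurableSpace T.Boundary := @borel _ T.ttop

/-- The set of edges of the tent `T_α`. -/
def tentE (α : T.E) : Set T.E := {β | T.Le α β}

/-- The relative potential `I_α f (ζ)`, summing `f` over the edges of the geodesic
from the root to `ζ` that lie in the tent `T_α`.  Taking `α` to be the root edge
gives the potential `If`. -/
noncomputable def relPot (α : T.E) (f : T.E → ℝ≥0∞) (ζ : T.Boundary) : ℝ≥0∞ :=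
  ∑' n, Set.indicator (T.tentE α) f (ζ.seq n)

/-- The relative `p`-energy `‖f‖_{ℓ^p(E(T_α))}^p`. -/
noncomputable def relEnergy (p : ℝ) (α : T.E) (f : T.E → ℝ≥0∞) : ℝ≥0∞ :=
  ∑' β, Set.indicator (T.tentE α) (fun γ => f γ ^ p) β

/-- The relative `p`-capacity `c_{p,α}(E)` of `E ⊆ ∂T`, with the tent `T_α`
as ambient tree. -/
noncomputable def relCap (p : ℝ) (α : T.E) (E : Set T.Boundary) : ℝ≥0∞ :=
  ⨅ f ∈ {f : T.E → ℝ≥0∞ | ∀ ζ ∈ E, 1 ≤ T.relPot α f ζ}, T.relEnergy p α f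

/-- The `p`-capacity of a subset of the boundary. -/
noncomputable def cap (p : ℝ) (E : Set T.Boundary) : ℝ≥0∞ := T.relCap p T.root E

end RTree

open RTree

open scoped NNReal



namespace RTree2

variable (T : RTree)

lemma le_root : ∀ β : T.E, T.Le T.root β := by
  suffices H : ∀ L (β : T.E), T.level β ≤ L → T.Le T.root β by
    exact fun β => H (T.level β) β le_rfl
  intro L
  induction L with
  | zero =>
    intro β h
    by_cases hβ : β = T.root
    · subst hβ; exact Relation.ReflTransGen.refl
    · obtain ⟨γ, hγ⟩ := Option.isSome_iff_exists.mp (T.parent_isSome β hβ)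
      have := T.level_parent β γ hγ
      omega
  | succ L ih =>
    intro β h
    by_cases hβ : β = T.root
    · subst hβ; exact Relation.ReflTransGen.refl
    · obtain ⟨γ, hγ⟩ := Option.isSome_iff_exists.mp (T.parent_isSome β hβ)
      have hl := T.level_parent β γ hγ
      exact (ih γ (by omega)).tail hγ

lemma tentE_root : T.tentE T.root = Set.univ :=
  Set.eq_univ_of_forall (fun β => le_root T β)

lemma relPot_root_eq (f : T.E → ℝ≥0∞) (ζ : T.Boundary) :
    T.relPot T.root f ζ = ∑' m, f (ζ.seq m) := by
  unfold RTree.relPot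
  rw [tentE_root, Set.indicator_univ]

lemma relEnergy_root_eq (p : ℝ) (f : T.E → ℝ≥0∞) :
    T.relEnergy p T.root f = ∑' β, f β ^ p := by
  unfold RTree.relEnergy
  rw [tentE_root, Set.indicator_univ]

lemma cap_eq (p : ℝ) (E : Set T.Boundary) :
    T.cap p E = ⨅ f ∈ {f : T.E → ℝ≥0∞ | ∀ ζ ∈ E, 1 ≤ T.relPot T.root f ζ},
      T.relEnergy p T.root f := rfl

lemma cap_mono (p : ℝ) {E F : Set T.Boundary} (h : E ⊆ F) : T.cap p E ≤ T.cap p F := by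
  rw [cap_eq, cap_eq]
  exact iInf_le_iInf_of_subset (fun f hf ζ hζ => hf ζ (h hζ))

lemma cap_le_energy (p : ℝ) (E : Set T.Boundary) (f : T.E → ℝ≥0∞)
    (hf : ∀ ζ ∈ E, 1 ≤ T.relPot T.root f ζ) : T.cap p E ≤ T.relEnergy p T.root f := by
  rw [cap_eq]
  exact iInf₂_le f hf

lemma cap_empty (p : ℝ) (hp : 0 < p) : T.cap p (∅ : Set T.Boundary) = 0 := by
  refine le_antisymm ?_ (zero_le)
  refine le_trans (cap_le_energy T p ∅ (fun _ => 0) (by simp)) ?_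
  rw [relEnergy_root_eq]
  simp [ENNReal.zero_rpow_of_pos hp]

lemma relPot_mono (α : T.E) {f g : T.E → ℝ≥0∞} (h : ∀ β, f β ≤ g β) (ζ : T.Boundary) :
    T.relPot α f ζ ≤ T.relPot α g ζ :=
  ENNReal.tsum_le_tsum (fun m => Set.indicator_le_indicator (h _))

lemma cap_singleton (p : ℝ) (hp : 1 < p) (ζ : T.Boundary) : T.cap p {ζ} = 0 := by
  classical
  have hp0 : (0:ℝ) < p := lt_trans one_pos hp
  -- For each m ≥ 1, an admissible function with small energy
  have key : ∀ m : ℕ, 1 ≤ m → T.cap p {ζ} ≤ ((m : ℝ≥0∞)⁻¹) ^ (p - 1) := by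
    intro m hm
    have hm0 : (m : ℝ≥0∞) ≠ 0 := by exact_mod_cast (by omega : m ≠ 0)
    have hmt : (m : ℝ≥0∞) ≠ ⊤ := ENNReal.natCast_ne_top m
    set F : Finset T.E := (Finset.range m).image ζ.seq with hF
    set f : T.E → ℝ≥0∞ := fun β => if β ∈ F then (m : ℝ≥0∞)⁻¹ else 0 with hfdef
    have hadm : ∀ ξ ∈ ({ζ} : Set T.Boundary), 1 ≤ T.relPot T.root f ξ := by
      intro ξ hξ
      rw [show ξ = ζ from hξ]
      rw [relPot_root_eq]
      have h1 : (1 : ℝ≥0∞) = ∑ k ∈ Finset.range m, f (ζ.seq k) := by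
        have : ∀ k ∈ Finset.range m, f (ζ.seq k) = (m : ℝ≥0∞)⁻¹ := by
          intro k hk
          simp only [hfdef]; exact if_pos (Finset.mem_image_of_mem _ hk)
        rw [Finset.sum_congr rfl this, Finset.sum_const, Finset.card_range, nsmul_eq_mul,
          ENNReal.mul_inv_cancel hm0 hmt]
      rw [h1]
      exact ENNReal.sum_le_tsum _
    refine le_trans (cap_le_energy T p _ f hadm) ?_
    rw [relEnergy_root_eq]
    have hz : ∀ β ∉ F, f β ^ p = 0 := by
      intro β hβ
      simp only [hfdef, if_neg hβ, ENNReal.zero_rpow_of_pos hp0]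
    rw [tsum_eq_sum hz]
    have : ∀ β ∈ F, f β ^ p = ((m : ℝ≥0∞)⁻¹) ^ p := by
      intro β hβ; simp only [hfdef, if_pos hβ]
    rw [Finset.sum_congr rfl this, Finset.sum_const]
    have hcard : F.card ≤ m := le_trans (Finset.card_image_le) (by simp)
    calc F.card • ((m : ℝ≥0∞)⁻¹) ^ p ≤ m • ((m : ℝ≥0∞)⁻¹) ^ p := by
          exact nsmul_le_nsmul_left (zero_le) hcard
      _ = (m : ℝ≥0∞) * ((m : ℝ≥0∞)⁻¹) ^ p := by rw [nsmul_eq_mul]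
      _ = ((m : ℝ≥0∞)⁻¹) ^ (p - 1) := by
          have him0 : ((m : ℝ≥0∞)⁻¹) ≠ 0 := by simp [hmt]
          have himt : ((m : ℝ≥0∞)⁻¹) ≠ ⊤ := by simp [hm0]
          have hsplit : ((m : ℝ≥0∞)⁻¹) ^ p = ((m : ℝ≥0∞)⁻¹) ^ (1:ℝ) * ((m : ℝ≥0∞)⁻¹) ^ (p-1) := by
            rw [← ENNReal.rpow_add _ _ him0 himt]; norm_num
          rw [hsplit, ENNReal.rpow_one, ← mul_assoc, ENNReal.mul_inv_cancel hm0 hmt, one_mul]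
  -- limit
  have hten : Filter.Tendsto (fun m : ℕ => ((m : ℝ≥0∞)⁻¹) ^ (p - 1)) Filter.atTop (nhds 0) := by
    have h1 : Filter.Tendsto (fun m : ℕ => ((m : ℝ≥0∞))⁻¹) Filter.atTop (nhds 0) :=
      ENNReal.tendsto_inv_nat_nhds_zero
    have h2 : Filter.Tendsto (fun x : ℝ≥0∞ => x ^ (p - 1)) (nhds 0) (nhds 0) := by
      have := (ENNReal.continuous_rpow_const (y := p - 1)).tendsto 0
      simpa [ENNReal.zero_rpow_of_pos (by linarith : (0:ℝ) < p - 1)] using this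
    exact h2.comp h1
  have : T.cap p {ζ} ≤ 0 := by
    refine ge_of_tendsto hten ?_
    filter_upwards [Filter.eventually_ge_atTop 1] with m hm using key m hm
  exact le_antisymm this (zero_le)

lemma cap_subsingleton (p : ℝ) (hp : 1 < p) {E : Set T.Boundary} (h : E.Subsingleton) :
    T.cap p E = 0 := by
  rcases h.eq_empty_or_singleton with rfl | ⟨ζ, rfl⟩
  · exact cap_empty T p (lt_trans one_pos hp)
  · exact cap_singleton T p hp ζ

lemma cap_union_le (p : ℝ) (hp : 1 < p) (A B : Set T.Boundary) :
    T.cap p (A ∪ B) ≤ T.cap p A + T.cap p B := by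
  have hp0 : p ≠ 0 := by positivity
  refine ENNReal.le_of_forall_pos_le_add (fun ε hε hfin => ?_)
  have hA : T.cap p A ≠ ⊤ := fun h => by simp [h] at hfin
  have hB : T.cap p B ≠ ⊤ := fun h => by simp [h] at hfin
  have hεhalf : (0:ℝ≥0∞) < (ε/2 : ℝ≥0) := by
    have : (0:ℝ≥0) < ε/2 := by positivity
    exact_mod_cast this
  -- pick near-optimal competitors
  have getf : ∀ (S : Set T.Boundary), T.cap p S ≠ ⊤ →
      ∃ f, (∀ ζ ∈ S, 1 ≤ T.relPot T.root f ζ) ∧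
        T.relEnergy p T.root f ≤ T.cap p S + (ε/2 : ℝ≥0) := by
    intro S hS
    have hlt : T.cap p S < T.cap p S + (ε/2 : ℝ≥0) :=
      ENNReal.lt_add_right hS (by exact_mod_cast (by positivity : (0:ℝ≥0) < ε/2).ne')
    rw [cap_eq] at hlt
    obtain ⟨f, hf⟩ := iInf_lt_iff.mp hlt
    obtain ⟨hfS, hflt⟩ := iInf_lt_iff.mp hf
    exact ⟨f, hfS, hflt.le⟩
  obtain ⟨f, hfA, hfe⟩ := getf A hA
  obtain ⟨g, hgB, hge⟩ := getf B hB
  set F : T.E → ℝ≥0∞ := fun β => (f β ^ p + g β ^ p) ^ p⁻¹ with hFdef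
  have hcanc : ∀ x : ℝ≥0∞, (x ^ p) ^ p⁻¹ = x := by
    intro x
    rw [← ENNReal.rpow_mul, mul_inv_cancel₀ hp0, ENNReal.rpow_one]
  have hcanc' : ∀ x : ℝ≥0∞, (x ^ p⁻¹) ^ p = x := by
    intro x
    rw [← ENNReal.rpow_mul, inv_mul_cancel₀ hp0, ENNReal.rpow_one]
  have hfF : ∀ β, f β ≤ F β := by
    intro β
    rw [hFdef]
    calc f β = (f β ^ p) ^ p⁻¹ := (hcanc _).symm
      _ ≤ (f β ^ p + g β ^ p) ^ p⁻¹ :=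
        ENNReal.rpow_le_rpow le_self_add (by positivity)
  have hgF : ∀ β, g β ≤ F β := by
    intro β
    rw [hFdef]
    calc g β = (g β ^ p) ^ p⁻¹ := (hcanc _).symm
      _ ≤ (f β ^ p + g β ^ p) ^ p⁻¹ :=
        ENNReal.rpow_le_rpow le_add_self (by positivity)
  have hadm : ∀ ζ ∈ A ∪ B, 1 ≤ T.relPot T.root F ζ := by
    intro ζ hζ
    rcases hζ with hζ | hζ
    · exact le_trans (hfA ζ hζ) (relPot_mono T _ hfF ζ)
    · exact le_trans (hgB ζ hζ) (relPot_mono T _ hgF ζ)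
  have hen : T.relEnergy p T.root F = T.relEnergy p T.root f + T.relEnergy p T.root g := by
    rw [relEnergy_root_eq, relEnergy_root_eq, relEnergy_root_eq, ← ENNReal.tsum_add]
    congr 1; funext β
    rw [hFdef, hcanc']
  calc T.cap p (A ∪ B) ≤ T.relEnergy p T.root F := cap_le_energy T p _ F hadm
    _ = T.relEnergy p T.root f + T.relEnergy p T.root g := hen
    _ ≤ (T.cap p A + (ε/2 : ℝ≥0)) + (T.cap p B + (ε/2 : ℝ≥0)) := add_le_add hfe hge
    _ = T.cap p A + T.cap p B + ε := by
        rw [add_add_add_comm]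
        congr 1
        rw [← ENNReal.coe_add]
        congr 1
        exact add_halves ε

lemma boundary_ext {ζ ξ : T.Boundary} (h : ζ.seq = ξ.seq) : ζ = ξ := by
  cases ζ; cases ξ; cases h; rfl

section Phi

variable (n : ℕ) (hhom : ∀ α : T.E, Nat.card {β : T.E // T.parent β = some α} = n)

noncomputable def childEquiv (α : T.E) : {β : T.E // T.parent β = some α} ≃ Fin n :=
  haveI : Finite {β : T.E // T.parent β = some α} := (T.locFin α).to_subtype
  Finite.equivFinOfCardEq (hhom α)

noncomputable def child (α : T.E) (i : Fin n) : T.E :=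
  ((childEquiv T n hhom α).symm i).1

lemma parent_child (α : T.E) (i : Fin n) :
    T.parent (child T n hhom α i) = some α :=
  ((childEquiv T n hhom α).symm i).2

lemma child_inj {α : T.E} {i j : Fin n}
    (h : child T n hhom α i = child T n hhom α j) : i = j := by
  have h2 : (childEquiv T n hhom α).symm i = (childEquiv T n hhom α).symm j :=
    Subtype.ext h
  exact (childEquiv T n hhom α).symm.injective h2

noncomputable def phiseq (ω : ℕ → Fin n) : ℕ → T.E
  | 0 => T.root
  | (k+1) => child T n hhom (phiseq ω k) (ω k)

noncomputable def phi (ω : ℕ → Fin n) : T.Boundary :=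
  ⟨phiseq T n hhom ω, rfl, fun k => parent_child T n hhom _ _⟩

lemma phi_seq (ω : ℕ → Fin n) (k : ℕ) : (phi T n hhom ω).seq k = phiseq T n hhom ω k := rfl

lemma phiseq_congr {ω ω' : ℕ → Fin n} (N : ℕ) (h : ∀ i < N, ω i = ω' i) :
    phiseq T n hhom ω N = phiseq T n hhom ω' N := by
  induction N with
  | zero => rfl
  | succ k ih =>
    rw [phiseq, phiseq, ih (fun i hi => h i (Nat.lt_succ_of_lt hi)), h k (Nat.lt_succ_self k)]

lemma phi_injective : Function.Injective (phi T n hhom) := by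
  intro ω ω' h
  have hs : ∀ k, phiseq T n hhom ω k = phiseq T n hhom ω' k :=
    fun k => congrFun (congrArg RTree.Boundary.seq h) k
  funext k
  have h1 := hs (k + 1)
  rw [phiseq, phiseq, hs k] at h1
  exact child_inj T n hhom h1

lemma phi_surjective : Function.Surjective (phi T n hhom) := by
  intro ζ
  set ω : ℕ → Fin n := fun k => childEquiv T n hhom (ζ.seq k) ⟨ζ.seq (k+1), ζ.seq_parent k⟩
    with hω
  refine ⟨ω, boundary_ext T ?_⟩
  funext k
  show phiseq T n hhom ω k = ζ.seq k
  induction k with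
  | zero => rw [phiseq, ζ.seq_zero]
  | succ k ih =>
    rw [phiseq, ih, hω]
    show ((childEquiv T n hhom (ζ.seq k)).symm
      ((childEquiv T n hhom (ζ.seq k)) ⟨ζ.seq (k+1), ζ.seq_parent k⟩)).1 = ζ.seq (k+1)
    rw [Equiv.symm_apply_apply]

lemma isOpen_cyl (N : ℕ) (σ : ℕ → Fin n) : IsOpen {ω : ℕ → Fin n | ∀ i < N, ω i = σ i} := by
  have he : {ω : ℕ → Fin n | ∀ i < N, ω i = σ i} = Set.pi (Set.Iio N) (fun i => {σ i}) := by
    ext ω; simp [Set.mem_pi, Set.mem_Iio]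
  rw [he]
  exact isOpen_set_pi (Set.finite_Iio N) (fun i _ => isOpen_discrete _)

lemma continuous_phi : @Continuous (ℕ → Fin n) T.Boundary _ T.ttop (phi T n hhom) := by
  rw [show T.ttop = TopologicalSpace.generateFrom {s | ∃ α, s = T.tentB α} from rfl]
  rw [continuous_generateFrom_iff]
  rintro s ⟨α, rfl⟩
  rw [isOpen_iff_forall_mem_open]
  intro ω hω
  obtain ⟨m, hm⟩ := hω
  refine ⟨{ω' | ∀ i < m, ω' i = ω i}, ?_, isOpen_cyl n m ω, fun i _ => rfl⟩
  intro ω' hω'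
  exact ⟨m, by rw [phi_seq, phiseq_congr T n hhom m hω']; exact hm⟩

lemma isCompact_image_phi (C : Set (ℕ → Fin n)) (hC : IsClosed C) :
    @IsCompact _ T.ttop (phi T n hhom '' C) := by
  letI := T.ttop
  exact (hC.isCompact).image (continuous_phi T n hhom)

end Phi

section CapInter

variable (n : ℕ) (hhom : ∀ α : T.E, Nat.card {β : T.E // T.parent β = some α} = n)

lemma cap_iInter (p : ℝ) (hp : 1 < p) (C : ℕ → Set (ℕ → Fin n))
    (hcl : ∀ k, IsClosed (C k)) (hanti : ∀ k, C (k+1) ⊆ C k) :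
    T.cap p (phi T n hhom '' ⋂ k, C k) = ⨅ k, T.cap p (phi T n hhom '' C k) := by
  refine le_antisymm (le_iInf fun k => cap_mono T p
    (Set.image_mono (Set.iInter_subset C k))) ?_
  set X := ⨅ k, T.cap p (phi T n hhom '' C k) with hX
  set Y := T.cap p (phi T n hhom '' ⋂ k, C k) with hY
  -- main inequality for a fixed c ∈ (0,1)
  have key : ∀ c : ℝ≥0∞, 0 < c → c < 1 → c ^ p * X ≤ Y := by
    intro c hc0 hc1
    have hc0' : c ≠ 0 := hc0.ne'
    have hct : c ≠ ⊤ := (lt_trans hc1 (by norm_num)).ne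
    rw [hY, cap_eq]
    refine le_iInf₂ (fun f hf => ?_)
    -- the open set of sequences where some partial sum exceeds c
    set U : Set (ℕ → Fin n) :=
      {ω | ∃ N, c < ∑ m ∈ Finset.range N, f (phiseq T n hhom ω m)} with hU
    have hUopen : IsOpen U := by
      rw [isOpen_iff_forall_mem_open]
      intro ω hω
      obtain ⟨N, hN⟩ := hω
      refine ⟨{ω' | ∀ i < N, ω' i = ω i}, ?_, isOpen_cyl n N ω, fun i _ => rfl⟩
      intro ω' hω'
      refine ⟨N, ?_⟩
      have : ∀ m ∈ Finset.range N, f (phiseq T n hhom ω' m) = f (phiseq T n hhom ω m) := by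
        intro m hm
        rw [phiseq_congr T n hhom m (fun i hi => hω' i (lt_of_lt_of_le hi
          (Nat.le_of_lt_succ (Nat.lt_succ_of_lt (Finset.mem_range.mp hm)))))]
      rwa [Finset.sum_congr rfl this]
    have hsub : (⋂ k, C k) ⊆ U := by
      intro ω hω
      have h1 : 1 ≤ T.relPot T.root f (phi T n hhom ω) :=
        hf _ (Set.mem_image_of_mem _ hω)
      rw [relPot_root_eq] at h1
      have h2 : c < ∑' m, f ((phi T n hhom ω).seq m) := lt_of_lt_of_le hc1 h1
      rw [ENNReal.tsum_eq_iSup_sum] at h2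
      obtain ⟨s, hs⟩ := lt_iSup_iff.mp h2
      obtain ⟨N, hsN⟩ := s.exists_nat_subset_range
      refine ⟨N, lt_of_lt_of_le hs ?_⟩
      refine le_trans (Finset.sum_le_sum_of_subset hsN) ?_
      exact le_of_eq rfl
    -- some C k fits inside U
    have hCk : ∃ k, C k ⊆ U := by
      by_contra hcon
      push_neg at hcon
      have hne : ∀ k, (C k ∩ Uᶜ).Nonempty := by
        intro k
        obtain ⟨ω, hω1, hω2⟩ := Set.not_subset.mp (hcon k)
        exact ⟨ω, hω1, hω2⟩
      have hmono : ∀ k, C (k+1) ∩ Uᶜ ⊆ C k ∩ Uᶜ :=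
        fun k => Set.inter_subset_inter_left _ (hanti k)
      have hclosed : ∀ k, IsClosed (C k ∩ Uᶜ) :=
        fun k => (hcl k).inter hUopen.isClosed_compl
      obtain ⟨ω, hω⟩ := IsCompact.nonempty_iInter_of_sequence_nonempty_isCompact_isClosed
        (fun k => C k ∩ Uᶜ) hmono hne ((hclosed 0).isCompact) hclosed
      rw [Set.mem_iInter] at hω
      have h1 : ω ∈ ⋂ k, C k := Set.mem_iInter.mpr (fun k => (hω k).1)
      exact (hω 0).2 (hsub h1)
    obtain ⟨k, hk⟩ := hCk
    -- rescaled competitor for C k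
    set g : T.E → ℝ≥0∞ := fun β => c⁻¹ * f β with hg
    have hgadm : ∀ ζ ∈ phi T n hhom '' C k, 1 ≤ T.relPot T.root g ζ := by
      rintro ζ ⟨ω, hω, rfl⟩
      obtain ⟨N, hN⟩ := hk hω
      rw [relPot_root_eq]
      have hsum : ∑ m ∈ Finset.range N, f (phiseq T n hhom ω m)
          ≤ ∑' m, f ((phi T n hhom ω).seq m) := by
        exact ENNReal.sum_le_tsum _
      have hpot : c < ∑' m, f ((phi T n hhom ω).seq m) := lt_of_lt_of_le hN hsum
      have : (1:ℝ≥0∞) = c⁻¹ * c := (ENNReal.inv_mul_cancel hc0' hct).symm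
      rw [this]
      calc c⁻¹ * c ≤ c⁻¹ * ∑' m, f ((phi T n hhom ω).seq m) :=
            mul_le_mul_right hpot.le _
        _ = ∑' m, g ((phi T n hhom ω).seq m) := by rw [← ENNReal.tsum_mul_left]
    have hgen : T.relEnergy p T.root g = c⁻¹ ^ p * T.relEnergy p T.root f := by
      rw [relEnergy_root_eq, relEnergy_root_eq, ← ENNReal.tsum_mul_left]
      congr 1; funext β
      rw [hg, ENNReal.mul_rpow_of_nonneg _ _ (by linarith : (0:ℝ) ≤ p)]
    have hXle : X ≤ c⁻¹ ^ p * T.relEnergy p T.root f := by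
      rw [hX]
      exact le_trans (iInf_le _ k) (le_trans (cap_le_energy T p _ g hgadm) (le_of_eq hgen))
    calc c ^ p * X ≤ c ^ p * (c⁻¹ ^ p * T.relEnergy p T.root f) :=
          mul_le_mul_right hXle _
      _ = ((c * c⁻¹) ^ p) * T.relEnergy p T.root f := by
          rw [ENNReal.mul_rpow_of_nonneg _ _ (by linarith : (0:ℝ) ≤ p), mul_assoc]
      _ = T.relEnergy p T.root f := by
          rw [ENNReal.mul_inv_cancel hc0' hct, ENNReal.one_rpow, one_mul]
  -- pass to the limit c → 1
  set cseq : ℕ → ℝ≥0∞ := fun m => ENNReal.ofReal (1 - 1/(m+2)) with hcseq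
  have hc0 : ∀ m, 0 < cseq m := by
    intro m
    rw [hcseq]
    refine ENNReal.ofReal_pos.mpr ?_
    have : (1:ℝ)/(m+2) ≤ 1/2 := by
      apply div_le_div_of_nonneg_left one_pos.le two_pos
      push_cast; linarith [Nat.cast_nonneg (α := ℝ) m]
    linarith
  have hc1 : ∀ m, cseq m < 1 := by
    intro m
    rw [hcseq, ← ENNReal.ofReal_one]
    refine (ENNReal.ofReal_lt_ofReal_iff one_pos).mpr ?_
    have : (0:ℝ) < 1/(m+2) := by positivity
    linarith
  have hctend : Filter.Tendsto (fun m => cseq m ^ p * X) Filter.atTop (nhds X) := by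
    have h1 : Filter.Tendsto (fun m : ℕ => (1 - 1/((m:ℝ)+2))) Filter.atTop (nhds 1) := by
      have h2 : Filter.Tendsto (fun m : ℕ => 1/((m:ℝ)+2)) Filter.atTop (nhds 0) := by
        have h2' : Filter.Tendsto (fun m : ℕ => ((m:ℝ)+2)⁻¹) Filter.atTop (nhds 0) :=
          Filter.Tendsto.comp tendsto_inv_atTop_zero
            (Filter.tendsto_atTop_add_const_right _ _ tendsto_natCast_atTop_atTop)
        simpa [one_div] using h2'
      simpa using (tendsto_const_nhds (x := (1:ℝ))).sub h2
    have h3 : Filter.Tendsto cseq Filter.atTop (nhds 1) := by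
      rw [hcseq, show (1:ℝ≥0∞) = ENNReal.ofReal 1 by simp]
      exact (ENNReal.continuous_ofReal.tendsto 1).comp h1
    have h4 : Filter.Tendsto (fun m => cseq m ^ p) Filter.atTop (nhds 1) := by
      have := (ENNReal.continuous_rpow_const (y := p)).tendsto 1
      rw [ENNReal.one_rpow] at this
      exact this.comp h3
    have h5 := ENNReal.Tendsto.mul_const h4 (Or.inl one_ne_zero) (b := X)
    rwa [one_mul] at h5
  refine le_of_tendsto hctend (Filter.Eventually.of_forall (fun m => ?_))
  exact key (cseq m) (hc0 m) (hc1 m)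

end CapInter

section Dval

variable (n : ℕ)

noncomputable def rr : ℝ := (2*(n:ℝ))⁻¹

noncomputable def dval (ω : ℕ → Fin n) : ℝ := ∑' k, (ω k : ℝ) * rr n ^ (k+1)

noncomputable def Mval : ℝ := ∑' k, ((n:ℝ) - 1) * rr n ^ (k+1)

variable (hn : 1 ≤ n)
include hn

lemma rr_pos : 0 < rr n := by
  have : (0:ℝ) < n := by exact_mod_cast hn
  rw [rr]; positivity

lemma rr_lt_one : rr n < 1 := by
  have h1 : (1:ℝ) ≤ n := by exact_mod_cast hn
  rw [rr]
  rw [inv_lt_one_iff₀]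
  right; linarith

lemma term_nonneg (ω : ℕ → Fin n) (k : ℕ) : 0 ≤ (ω k : ℝ) * rr n ^ (k+1) := by
  have := (rr_pos n hn).le
  positivity

lemma term_le (ω : ℕ → Fin n) (k : ℕ) :
    (ω k : ℝ) * rr n ^ (k+1) ≤ ((n:ℝ) - 1) * rr n ^ (k+1) := by
  have h1 : ((ω k : ℕ) : ℝ) ≤ (n:ℝ) - 1 := by
    have := (ω k).isLt
    have : ((ω k : ℕ) : ℝ) + 1 ≤ (n : ℝ) := by exact_mod_cast this
    linarith
  exact mul_le_mul_of_nonneg_right h1 (pow_nonneg (rr_pos n hn).le _)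

lemma summable_bound : Summable (fun k : ℕ => ((n:ℝ) - 1) * rr n ^ (k+1)) := by
  have h : Summable (fun k : ℕ => rr n ^ k) :=
    summable_geometric_of_lt_one (rr_pos n hn).le (rr_lt_one n hn)
  have h2 : Summable (fun k : ℕ => (((n:ℝ) - 1) * rr n) * rr n ^ k) := h.mul_left _
  refine h2.congr (fun k => ?_)
  rw [pow_succ]
  ring

lemma dval_summable (ω : ℕ → Fin n) : Summable (fun k => (ω k : ℝ) * rr n ^ (k+1)) :=
  Summable.of_nonneg_of_le (term_nonneg n hn ω) (term_le n hn ω) (summable_bound n hn)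

lemma dval_nonneg (ω : ℕ → Fin n) : 0 ≤ dval n ω :=
  tsum_nonneg (term_nonneg n hn ω)

lemma Mval_nonneg : 0 ≤ Mval n := by
  refine tsum_nonneg (fun k => ?_)
  have h1 : (1:ℝ) ≤ n := by exact_mod_cast hn
  have := (rr_pos n hn).le
  have h2 : (0:ℝ) ≤ (n:ℝ) - 1 := by linarith
  positivity

lemma dval_le_Mval (ω : ℕ → Fin n) : dval n ω ≤ Mval n :=
  Summable.tsum_le_tsum (term_le n hn ω) (dval_summable n hn ω) (summable_bound n hn)

lemma continuous_dval : Continuous (dval n) := by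
  refine continuous_tsum (u := fun k => ((n:ℝ) - 1) * rr n ^ (k+1)) (fun k => ?_)
    (summable_bound n hn) (fun k ω => ?_)
  · have hcast : Continuous (fun i : Fin n => ((i:ℕ):ℝ)) := continuous_of_discreteTopology
    exact (hcast.comp (continuous_apply k)).mul continuous_const
  · rw [Real.norm_of_nonneg (term_nonneg n hn ω k)]
    exact term_le n hn ω k

set_option maxHeartbeats 1000000 in
lemma dval_lt {ω ω' : ℕ → Fin n} (k : ℕ) (hagree : ∀ j < k, ω j = ω' j)
    (hlt : (ω k : ℕ) < (ω' k : ℕ)) : dval n ω < dval n ω' := by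
  have hr0 := rr_pos n hn
  have hr1 := rr_lt_one n hn
  have hsa := dval_summable n hn ω
  have hsb := dval_summable n hn ω'
  have hda := (Summable.sum_add_tsum_nat_add (k+1) hsa).symm
  have hdb := (Summable.sum_add_tsum_nat_add (k+1) hsb).symm
  unfold dval
  rw [hda, hdb]
  -- tail of ω is bounded
  have htail : ∑' j, (ω (j + (k+1)) : ℝ) * rr n ^ ((j + (k+1))+1) < rr n ^ (k+1) := by
    have hb1 : ∑' j, (ω (j + (k+1)) : ℝ) * rr n ^ ((j + (k+1))+1)
        ≤ ∑' j : ℕ, (((n:ℝ) - 1) * rr n ^ (k+2)) * rr n ^ j := by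
      refine Summable.tsum_le_tsum (fun j => ?_)
        ((summable_nat_add_iff (f := fun k' => (ω k' : ℝ) * rr n ^ (k'+1)) (k+1)).mpr hsa) ?_
      · refine le_trans (term_le n hn ω _) (le_of_eq ?_)
        rw [show j + (k+1) + 1 = (k+2) + j from by omega, pow_add]
        ring
      · exact (summable_geometric_of_lt_one hr0.le hr1).mul_left _
    have hb2 : ∑' j : ℕ, (((n:ℝ) - 1) * rr n ^ (k+2)) * rr n ^ j
        = ((n:ℝ) - 1) * rr n ^ (k+2) * (1 - rr n)⁻¹ := by
      rw [tsum_mul_left, tsum_geometric_of_lt_one hr0.le hr1]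
    have hkey : ((n:ℝ) - 1) * rr n ^ (k+2) * (1 - rr n)⁻¹ < rr n ^ (k+1) := by
      have hrn : (n:ℝ) * rr n = 1/2 := by
        rw [rr]
        have : (0:ℝ) < n := by exact_mod_cast hn
        field_simp
      have h1r : (0:ℝ) < 1 - rr n := by linarith
      have hpk : (0:ℝ) < rr n ^ (k+1) := pow_pos hr0 _
      have hstep : ((n:ℝ) - 1) * rr n < 1 - rr n := by nlinarith
      have : rr n ^ (k+2) = rr n ^ (k+1) * rr n := by rw [pow_succ]
      rw [this]
      calc ((n:ℝ) - 1) * (rr n ^ (k+1) * rr n) * (1 - rr n)⁻¹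
          = (rr n ^ (k+1) * (1 - rr n)⁻¹) * (((n:ℝ) - 1) * rr n) := by ring
        _ < (rr n ^ (k+1) * (1 - rr n)⁻¹) * (1 - rr n) := by
            refine mul_lt_mul_of_pos_left hstep ?_
            positivity
        _ = rr n ^ (k+1) := by
            field_simp
    exact lt_of_le_of_lt hb1 (lt_of_le_of_lt (le_of_eq hb2) hkey)
  have hhead : (∑ j ∈ Finset.range (k+1), (ω j : ℝ) * rr n ^ (j+1)) + rr n ^ (k+1)
      ≤ ∑ j ∈ Finset.range (k+1), (ω' j : ℝ) * rr n ^ (j+1) := by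
    rw [Finset.sum_range_succ, Finset.sum_range_succ]
    have heq : ∑ j ∈ Finset.range k, (ω j : ℝ) * rr n ^ (j+1)
        = ∑ j ∈ Finset.range k, (ω' j : ℝ) * rr n ^ (j+1) := by
      refine Finset.sum_congr rfl (fun j hj => ?_)
      rw [hagree j (Finset.mem_range.mp hj)]
    rw [heq]
    have hv : ((ω k : ℕ) : ℝ) + 1 ≤ ((ω' k : ℕ) : ℝ) := by exact_mod_cast hlt
    have hpk : (0:ℝ) < rr n ^ (k+1) := pow_pos hr0 _
    nlinarith
  have htb : 0 ≤ ∑' j, (ω' (j + (k+1)) : ℝ) * rr n ^ ((j + (k+1))+1) :=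
    tsum_nonneg (fun j => term_nonneg n hn ω' _)
  linarith

lemma dval_injective : Function.Injective (dval n) := by
  rcases eq_or_lt_of_le hn with h1 | h2
  · -- n = 1 : the domain is a subsingleton
    intro ω ω' _
    funext k
    have : Subsingleton (Fin n) := by rw [← h1]; infer_instance
    exact Subsingleton.elim _ _
  · intro ω ω' h
    by_contra hne
    have hex : ∃ k, ω k ≠ ω' k := Function.ne_iff.mp hne
    set k := Nat.find hex with hk
    have hspec : ω k ≠ ω' k := Nat.find_spec hex
    have hagree : ∀ j < k, ω j = ω' j := by
      intro j hj
      by_contra hc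
      exact Nat.find_min hex hj hc
    rcases Nat.lt_trichotomy (ω k : ℕ) (ω' k : ℕ) with hlt | heq | hgt
    · exact absurd h (ne_of_lt (dval_lt n hn k hagree hlt))
    · exact hspec (Fin.ext heq)
    · refine absurd h.symm (ne_of_lt (dval_lt n hn k ?_ hgt))
      exact fun j hj => (hagree j hj).symm

end Dval

end RTree2


/-- For the homogeneous tree `T^n` of branching number `n` and any real
`t ∈ [0, c_p(∂T^n)]`, there is a compact subset `K_t ⊆ ∂T^n` with `c_p(K_t) = t`. -/
theorem stmt10 (T : RTree) (p : ℝ) (hp : 1 < p) (n : ℕ) (hn : 1 ≤ n)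
    (hhom : ∀ α : T.E, Nat.card {β : T.E // T.parent β = some α} = n)
    (t : ℝ) (ht0 : 0 ≤ t) (ht1 : t ≤ (T.cap p Set.univ).toReal) :
    ∃ K : Set T.Boundary, @IsCompact _ T.ttop K ∧ T.cap p K = ENNReal.ofReal t := by
  classical
  by_cases htop : T.cap p Set.univ = ⊤
  · -- degenerate: infinite total capacity forces t = 0
    have ht : t = 0 := le_antisymm (by simpa [htop] using ht1) ht0
    refine ⟨∅, ?_, ?_⟩
    · letI := T.ttop
      exact isCompact_empty
    · rw [ht, ENNReal.ofReal_zero]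
      exact RTree2.cap_empty T p (lt_trans one_pos hp)
  · set v : (ℕ → Fin n) → ℝ := RTree2.dval n with hv
    have hvc : Continuous v := RTree2.continuous_dval n hn
    have hvinj : Function.Injective v := RTree2.dval_injective n hn
    set M : ℝ := RTree2.Mval n with hM
    have hM0 : 0 ≤ M := RTree2.Mval_nonneg n hn
    set Phi : (ℕ → Fin n) → T.Boundary := RTree2.phi T n hhom with hPhi
    set K : ℝ → Set T.Boundary := fun x => Phi '' (v ⁻¹' Set.Iic x) with hK
    have hKcomp : ∀ x, @IsCompact _ T.ttop (K x) := by
      intro x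
      exact RTree2.isCompact_image_phi T n hhom _ (isClosed_Iic.preimage hvc)
    have hKuniv : K M = Set.univ := by
      have h1 : v ⁻¹' Set.Iic M = Set.univ :=
        Set.eq_univ_of_forall (fun ω => RTree2.dval_le_Mval n hn ω)
      rw [hK]
      simp only [h1, Set.image_univ]
      exact Set.range_eq_univ.mpr (RTree2.phi_surjective T n hhom)
    have capfin : ∀ E : Set T.Boundary, T.cap p E ≠ ⊤ :=
      fun E => ne_top_of_le_ne_top htop (RTree2.cap_mono T p (Set.subset_univ E))
    have capfib : ∀ x : ℝ, T.cap p (Phi '' (v ⁻¹' {x})) = 0 := by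
      intro x
      refine RTree2.cap_subsingleton T p hp ?_
      refine Set.Subsingleton.image ?_ _
      intro ω hω ω' hω'
      exact hvinj (hω.trans hω'.symm)
    set S : Set ℝ := {x | x ∈ Set.Icc 0 M ∧ (T.cap p (K x)).toReal ≤ t} with hS
    have h0S : (0:ℝ) ∈ S := by
      refine ⟨⟨le_rfl, hM0⟩, ?_⟩
      have hsub : (v ⁻¹' Set.Iic 0) ⊆ (v ⁻¹' {(0:ℝ)}) := by
        intro ω hω
        exact le_antisymm hω (RTree2.dval_nonneg n hn ω)
      have : T.cap p (K 0) ≤ T.cap p (Phi '' (v ⁻¹' {(0:ℝ)})) :=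
        RTree2.cap_mono T p (Set.image_mono hsub)
      rw [capfib 0] at this
      have h0 : T.cap p (K 0) = 0 := le_antisymm this (zero_le)
      rw [h0]
      simpa using ht0
    have hbdd : BddAbove S := ⟨M, fun x hx => hx.1.2⟩
    set x₀ : ℝ := sSup S with hx₀
    have hx00 : 0 ≤ x₀ := le_csSup hbdd h0S
    have hx0M : x₀ ≤ M := csSup_le ⟨0, h0S⟩ (fun x hx => hx.1.2)
    -- (a) upper bound
    have hub : T.cap p (K x₀) ≤ ENNReal.ofReal t := by
      obtain ⟨u, humono, hule, hutend, huS⟩ :=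
        (isLUB_csSup ⟨0, h0S⟩ hbdd).exists_seq_monotone_tendsto ⟨0, h0S⟩
      set C : ℕ → Set (ℕ → Fin n) := fun k => v ⁻¹' Set.Icc (u k) x₀ with hC
      have hCcl : ∀ k, IsClosed (C k) := fun k => isClosed_Icc.preimage hvc
      have hCanti : ∀ k, C (k+1) ⊆ C k := by
        intro k ω hω
        exact ⟨le_trans (humono (Nat.le_succ k)) hω.1, hω.2⟩
      have hiInf : ⨅ k, T.cap p (Phi '' C k) = 0 := by
        have hinter := RTree2.cap_iInter T n hhom p hp C hCcl hCanti
        have hsub : (⋂ k, C k) ⊆ v ⁻¹' {x₀} := by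
          intro ω hω
          rw [Set.mem_iInter] at hω
          have h1 : x₀ ≤ v ω := le_of_tendsto' hutend (fun k => (hω k).1)
          exact le_antisymm (hω 0).2 h1
        have h2 : T.cap p (Phi '' ⋂ k, C k) ≤ 0 := by
          rw [← capfib x₀]
          exact RTree2.cap_mono T p (Set.image_mono hsub)
        rw [← hinter]
        exact le_antisymm h2 (zero_le)
      refine ENNReal.le_of_forall_pos_le_add (fun ε hε _ => ?_)
      have hlt : ⨅ k, T.cap p (Phi '' C k) < (ε : ℝ≥0∞) := by
        rw [hiInf]
        exact_mod_cast hε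
      obtain ⟨k, hk⟩ := iInf_lt_iff.mp hlt
      have hsplit : K x₀ ⊆ K (u k) ∪ Phi '' C k := by
        rintro ζ ⟨ω, hω, rfl⟩
        rcases le_total (v ω) (u k) with h | h
        · exact Or.inl (Set.mem_image_of_mem _ h)
        · exact Or.inr (Set.mem_image_of_mem _ ⟨h, hω⟩)
      have hKuk : T.cap p (K (u k)) ≤ ENNReal.ofReal t :=
        (ENNReal.le_ofReal_iff_toReal_le (capfin _) ht0).mpr (huS k).2
      calc T.cap p (K x₀) ≤ T.cap p (K (u k) ∪ Phi '' C k) := RTree2.cap_mono T p hsplit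
        _ ≤ T.cap p (K (u k)) + T.cap p (Phi '' C k) := RTree2.cap_union_le T p hp _ _
        _ ≤ ENNReal.ofReal t + (ε : ℝ≥0∞) := add_le_add hKuk hk.le
    -- (b) lower bound
    have hlb : ENNReal.ofReal t ≤ T.cap p (K x₀) := by
      by_contra hcon
      rw [not_le] at hcon
      have hx0ltM : x₀ < M := by
        rcases lt_or_eq_of_le hx0M with h | h
        · exact h
        · exfalso
          rw [h, hKuniv] at hcon
          have : ENNReal.ofReal t ≤ T.cap p Set.univ := by
            rw [← ENNReal.ofReal_toReal htop]
            exact ENNReal.ofReal_le_ofReal ht1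
          exact absurd hcon (not_lt.mpr this)
      set y : ℕ → ℝ := fun k => x₀ + (M - x₀)/(k+1) with hy
      have hMx : (0:ℝ) < M - x₀ := by linarith
      have hygt : ∀ k, x₀ < y k := by
        intro k
        have : (0:ℝ) < (M - x₀)/(k+1) := by positivity
        rw [hy]; dsimp only; linarith
      have hyle : ∀ k, y k ≤ M := by
        intro k
        have h1 : (M - x₀)/((k:ℝ)+1) ≤ (M - x₀) := by
          refine div_le_self hMx.le ?_
          have : (0:ℝ) ≤ (k:ℝ) := Nat.cast_nonneg k
          linarith
        rw [hy]; dsimp only; linarith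
      have hymono : ∀ k, y (k+1) ≤ y k := by
        intro k
        have h1 : (M - x₀)/((k:ℝ)+1+1) ≤ (M - x₀)/((k:ℝ)+1) := by
          refine div_le_div_of_nonneg_left hMx.le ?_ ?_
          · have : (0:ℝ) ≤ (k:ℝ) := Nat.cast_nonneg k
            linarith
          · linarith
        rw [hy]; push_cast; linarith
      have hytend : Filter.Tendsto y Filter.atTop (nhds x₀) := by
        have h1 : Filter.Tendsto (fun k : ℕ => (M - x₀)/((k:ℝ)+1)) Filter.atTop (nhds 0) := by
          have h2 : Filter.Tendsto (fun k : ℕ => ((k:ℝ)+1)⁻¹) Filter.atTop (nhds 0) :=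
            Filter.Tendsto.comp tendsto_inv_atTop_zero
              (Filter.tendsto_atTop_add_const_right _ _ tendsto_natCast_atTop_atTop)
          have h3 := h2.const_mul (M - x₀)
          rw [mul_zero] at h3
          refine h3.congr (fun k => ?_)
          rw [div_eq_mul_inv]
        have h4 := (tendsto_const_nhds (x := x₀) (f := Filter.atTop (α := ℕ))).add h1
        rw [add_zero] at h4
        exact h4
      set C : ℕ → Set (ℕ → Fin n) := fun k => v ⁻¹' Set.Iic (y k) with hC
      have hCcl : ∀ k, IsClosed (C k) := fun k => isClosed_Iic.preimage hvc
      have hCanti : ∀ k, C (k+1) ⊆ C k := fun k ω hω => le_trans hω (hymono k)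
      have hCinter : (⋂ k, C k) = v ⁻¹' Set.Iic x₀ := by
        ext ω
        rw [Set.mem_iInter]
        constructor
        · intro h
          exact ge_of_tendsto' hytend (fun k => h k)
        · intro h k
          exact le_trans h (hygt k).le
      have hinter := RTree2.cap_iInter T n hhom p hp C hCcl hCanti
      rw [hCinter] at hinter
      have hcon2 : ⨅ k, T.cap p (Phi '' C k) < ENNReal.ofReal t := by
        rw [← hinter]
        exact hcon
      obtain ⟨k, hk⟩ := iInf_lt_iff.mp hcon2
      have hyS : y k ∈ S := by
        refine ⟨⟨le_trans hx00 (hygt k).le, hyle k⟩, ?_⟩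
        exact (ENNReal.le_ofReal_iff_toReal_le (capfin _) ht0).mp hk.le
      exact absurd (le_csSup hbdd hyS) (not_le.mpr (hygt k))
    exact ⟨K x₀, hKcomp x₀, le_antisymm hub hlb⟩
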